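/- Let T(ρ) = (tr[ρ]·I - ρ^T)/(d-1) be the Werner–Holevo channel on M_d(ℂ) with d ≥ 3 odd. Then T is a unital quantum channel (completely positive, trace-preserving, T(I)=I) that is not a convex combination of unitary conjugations. -/

import Mathlib

open Matrix
open scoped ComplexOrder

/-- The action of `id_n ⊗ T` on block matrices. -/
def blockApply (n d : ℕ) (T : Matrix (Fin d) (Fin d) ℂ → Matrix (Fin d) (Fin d) ℂ)
    (M : Matrix (Fin n × Fin d) (Fin n × Fin d) ℂ) :
    Matrix (Fin n × Fin d) (Fin n × Fin d) ℂ :=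
  Matrix.of fun p q => T (Matrix.of fun k l => M (p.1, k) (q.1, l)) p.2 q.2

/-- Complete positivity. -/
def IsCP (d : ℕ) (T : Matrix (Fin d) (Fin d) ℂ → Matrix (Fin d) (Fin d) ℂ) : Prop :=
  ∀ (n : ℕ) (M : Matrix (Fin n × Fin d) (Fin n × Fin d) ℂ),
    M.PosSemidef → (blockApply n d T M).PosSemidef

def Kmat (d : ℕ) (i j : Fin d) : Matrix (Fin d) (Fin d) ℂ :=
  Matrix.single i j 1 - Matrix.single j i 1

lemma Kmat_conjTranspose (d : ℕ) (i j : Fin d) : (Kmat d i j)ᴴ = - Kmat d i j := by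
  ext a b
  simp only [Kmat, Matrix.conjTranspose_apply, Matrix.sub_apply, Matrix.neg_apply, star_sub,
    Matrix.single, Matrix.of_apply, apply_ite (star : ℂ → ℂ), star_one, star_zero]
  by_cases h1 : i = b <;> by_cases h2 : j = a <;> by_cases h3 : j = b <;> by_cases h4 : i = a <;>
    simp [h1, h2, h3, h4, and_comm]

lemma Kmat_star_entry (d : ℕ) (i j a b : Fin d) :
    star (Kmat d i j a b) = Kmat d i j a b := by
  simp only [Kmat, Matrix.sub_apply, Matrix.single, Matrix.of_apply, star_sub,
    apply_ite (star : ℂ → ℂ), star_one, star_zero]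

lemma std_mul_std {d : ℕ} (ρ : Matrix (Fin d) (Fin d) ℂ) (i j k l : Fin d) :
    Matrix.single i j (1:ℂ) * ρ * Matrix.single k l 1
      = ρ j k • Matrix.single i l 1 := by
  ext a b
  simp only [Matrix.mul_apply, Matrix.single, Matrix.of_apply, Matrix.smul_apply,
    smul_eq_mul, ite_and, ite_mul, mul_ite, one_mul, mul_one, zero_mul, mul_zero,
    Finset.sum_ite_eq, Finset.sum_ite_eq', Finset.mem_univ, if_true]
  by_cases h1 : i = a <;> by_cases h2 : l = b <;> simp [h1, h2]

lemma sum_std_diag (d : ℕ) : ∑ i : Fin d, Matrix.single i i (1:ℂ) = 1 := by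
  ext a b
  simp only [Matrix.sum_apply, Matrix.single, Matrix.of_apply, Matrix.one_apply, ite_and]
  by_cases h : a = b
  · subst h; simp [Finset.sum_ite_eq]
  · simp only [if_neg h]
    refine Finset.sum_eq_zero fun i _ => ?_
    by_cases h1 : i = a <;> by_cases h2 : i = b <;> simp_all

lemma sum_std_transpose {d : ℕ} (ρ : Matrix (Fin d) (Fin d) ℂ) :
    ∑ i : Fin d, ∑ j : Fin d, ρ j i • Matrix.single i j (1:ℂ) = ρᵀ := by
  ext a b
  simp [Matrix.sum_apply, Matrix.single, ite_and, Finset.sum_ite_eq, Finset.sum_ite_eq']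

lemma lemA {d : ℕ} (ρ : Matrix (Fin d) (Fin d) ℂ) :
    ∑ i : Fin d, ∑ j : Fin d, Kmat d i j * ρ * (Kmat d i j)ᴴ
      = (2:ℂ) • (ρ.trace • (1 : Matrix (Fin d) (Fin d) ℂ) - ρᵀ) := by
  have expand : ∀ i j : Fin d, Kmat d i j * ρ * (Kmat d i j)ᴴ
      = ρ j j • Matrix.single i i 1 + ρ i i • Matrix.single j j 1
        - ρ j i • Matrix.single i j 1 - ρ i j • Matrix.single j i 1 := by
    intro i j
    rw [Kmat_conjTranspose]
    simp only [Kmat, Matrix.sub_mul, Matrix.mul_sub, Matrix.mul_neg, std_mul_std]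
    abel
  simp only [expand]
  have h1 : ∑ i : Fin d, ∑ j : Fin d, ρ j j • Matrix.single i i (1:ℂ)
      = ρ.trace • (1 : Matrix (Fin d) (Fin d) ℂ) := by
    rw [← sum_std_diag d, Finset.smul_sum]
    refine Finset.sum_congr rfl fun i _ => ?_
    rw [← Finset.sum_smul]
    rfl
  have h2 : ∑ i : Fin d, ∑ j : Fin d, ρ i i • Matrix.single j j (1:ℂ)
      = ρ.trace • (1 : Matrix (Fin d) (Fin d) ℂ) := by
    rw [Finset.sum_comm]; exact h1
  have h3 : ∑ i : Fin d, ∑ j : Fin d, ρ j i • Matrix.single i j (1:ℂ) = ρᵀ :=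
    sum_std_transpose ρ
  have h4 : ∑ i : Fin d, ∑ j : Fin d, ρ i j • Matrix.single j i (1:ℂ) = ρᵀ := by
    rw [Finset.sum_comm]; exact sum_std_transpose ρ
  simp only [Finset.sum_sub_distrib, Finset.sum_add_distrib, h1, h2, h3, h4, two_smul]
  abel
def bigK (n d : ℕ) (i j : Fin d) : Matrix (Fin n × Fin d) (Fin n × Fin d) ℂ :=
  Matrix.of fun p q => (if p.1 = q.1 then 1 else 0) * Kmat d i j p.2 q.2

lemma lemB {n d : ℕ} (i j : Fin d) (M : Matrix (Fin n × Fin d) (Fin n × Fin d) ℂ)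
    (p q : Fin n × Fin d) :
    (bigK n d i j * M * (bigK n d i j)ᴴ) p q
      = (Kmat d i j * (Matrix.of fun k l => M (p.1, k) (q.1, l)) * (Kmat d i j)ᴴ) p.2 q.2 := by
  rcases p with ⟨p1, p2⟩
  rcases q with ⟨q1, q2⟩
  simp only [Matrix.mul_apply, Matrix.conjTranspose_apply, bigK, Matrix.of_apply,
    Fintype.sum_prod_type, star_mul', Kmat_star_entry, apply_ite (star : ℂ → ℂ),
    star_one, star_zero, ite_mul, one_mul, zero_mul, mul_ite, mul_one, mul_zero,
    Finset.sum_ite_eq, Finset.sum_ite_eq', Finset.mem_univ, if_true,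
    Finset.sum_ite_irrel, Finset.sum_const_zero]
lemma smul_posSemidef {m : Type*} [Fintype m] {M : Matrix m m ℂ} (hM : M.PosSemidef)
    {r : ℝ} (hr : 0 ≤ r) : ((r:ℂ) • M).PosSemidef := by
  refine Matrix.PosSemidef.of_dotProduct_mulVec_nonneg ?_ ?_
  · have : ((r:ℂ) • M)ᴴ = (star (r:ℂ)) • Mᴴ := Matrix.conjTranspose_smul _ _
    rw [Matrix.IsHermitian, this, hM.1.eq, RCLike.star_def, Complex.conj_ofReal]
  · intro x
    rw [Matrix.smul_mulVec, dotProduct_smul, smul_eq_mul]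
    exact mul_nonneg (by exact_mod_cast hr) (hM.dotProduct_mulVec_nonneg x)

set_option maxHeartbeats 1000000 in
lemma cp_lemma (d : ℕ) (hd1 : 1 ≤ d) :
    IsCP d (fun ρ => ((d : ℂ) - 1)⁻¹ • (ρ.trace • (1 : Matrix (Fin d) (Fin d) ℂ) - ρᵀ)) := by
  intro n M hM
  have key : blockApply n d
        (fun ρ => ((d : ℂ) - 1)⁻¹ • (ρ.trace • (1 : Matrix (Fin d) (Fin d) ℂ) - ρᵀ)) M
      = (((2 * ((d:ℝ) - 1))⁻¹ : ℝ) : ℂ) • ∑ i : Fin d, ∑ j : Fin d,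
          bigK n d i j * M * (bigK n d i j)ᴴ := by
    ext p q
    have hA := congrFun (congrFun (lemA (Matrix.of fun k l => M (p.1, k) (q.1, l))) p.2) q.2
    simp only [Matrix.sum_apply, Matrix.smul_apply, smul_eq_mul] at hA
    simp only [blockApply, Matrix.of_apply, Matrix.smul_apply, Matrix.sum_apply, smul_eq_mul,
      lemB]
    rw [hA]
    push_cast
    rw [mul_inv]
    ring
  rw [key]
  have hsum : (∑ i : Fin d, ∑ j : Fin d,
      bigK n d i j * M * (bigK n d i j)ᴴ).PosSemidef := by
    apply Finset.sum_induction _ _ (fun a b ha hb => ha.add hb) Matrix.PosSemidef.zero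
    intro i _
    exact Finset.sum_induction _ _ (fun a b ha hb => ha.add hb) Matrix.PosSemidef.zero
      (fun j _ => hM.mul_mul_conjTranspose_same _)
  refine smul_posSemidef hsum ?_
  have : (1:ℝ) ≤ (d:ℝ) := by exact_mod_cast hd1
  exact inv_nonneg.mpr (by nlinarith)
lemma unitary_conj_entry {d : ℕ} (V : Matrix (Fin d) (Fin d) ℂ) (a b x y : Fin d) :
    (V * Matrix.single a b (1:ℂ) * Vᴴ) x y = V x a * star (V y b) := by
  rw [Matrix.mul_apply, Finset.sum_eq_single b
    (fun c _ hc => by rw [Matrix.mul_single_apply_of_ne (c := (1:ℂ)) (i := a) (j := b) (a := x) (b := c) (hbj := hc) (M := V), zero_mul])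
    (fun h => absurd (Finset.mem_univ b) h)]
  rw [Matrix.mul_single_apply_same, mul_one, Matrix.conjTranspose_apply]

lemma unitary_bound {d : ℕ} (V : Matrix (Fin d) (Fin d) ℂ) (hV : V * Vᴴ = 1) :
    ∑ a : Fin d, ∑ b : Fin d, Complex.normSq (V a b + V b a)
      = 2 * ((∑ a : Fin d, ∑ b : Fin d, (V b a * star (V a b)).re) + d) := by
  have hrow : ∀ a : Fin d, ∑ b : Fin d, Complex.normSq (V a b) = 1 := by
    intro a
    have h1 := congrFun (congrFun hV a) a
    rw [Matrix.mul_apply] at h1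
    have h2 : (∑ b : Fin d, (Complex.normSq (V a b) : ℂ)) = 1 := by
      simpa [Matrix.conjTranspose_apply, Complex.mul_conj, Matrix.one_apply] using h1
    exact_mod_cast h2
  have hd1 : ∑ a : Fin d, ∑ b : Fin d, Complex.normSq (V a b) = d := by
    simp [hrow]
  have hd2 : ∑ a : Fin d, ∑ b : Fin d, Complex.normSq (V b a) = d := by
    rw [Finset.sum_comm]; exact hd1
  have expand : ∀ a b : Fin d, Complex.normSq (V a b + V b a)
      = Complex.normSq (V a b) + Complex.normSq (V b a) + 2 * (V b a * star (V a b)).re := by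
    intro a b
    rw [Complex.normSq_add]
    congr 1
    have h3 : V a b * (starRingEnd ℂ) (V b a)
        = (starRingEnd ℂ) (V b a * (starRingEnd ℂ) (V a b)) := by
      rw [_root_.map_mul, Complex.conj_conj, mul_comm]
    rw [h3, Complex.conj_re]
    rfl
  simp only [expand]
  simp only [Finset.sum_add_distrib, hd1, hd2, ← Finset.mul_sum]
  ring
set_option maxHeartbeats 1000000 in
/-- The Werner–Holevo channel `T(ρ) = (tr[ρ]·I - ρᵀ)/(d-1)` for odd `d ≥ 3` is a
unital quantum channel that is not a convex combination of unitary conjugations. -/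
theorem stmt_16 (d : ℕ) (hd : Odd d) (hd3 : 3 ≤ d)
    (T : Matrix (Fin d) (Fin d) ℂ → Matrix (Fin d) (Fin d) ℂ)
    (hT : T = fun ρ => ((d : ℂ) - 1)⁻¹ •
      (ρ.trace • (1 : Matrix (Fin d) (Fin d) ℂ) - ρᵀ)) :
    IsCP d T ∧
    (∀ A : Matrix (Fin d) (Fin d) ℂ, (T A).trace = A.trace) ∧
    T 1 = 1 ∧
    ¬ ∃ (n : ℕ) (p : Fin n → ℝ) (U : Fin n → Matrix (Fin d) (Fin d) ℂ),
        (∀ i, 0 ≤ p i) ∧ ∑ i, p i = 1 ∧ (∀ i, U i ∈ Matrix.unitaryGroup (Fin d) ℂ) ∧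
        ∀ ρ : Matrix (Fin d) (Fin d) ℂ, T ρ = ∑ i, (p i : ℂ) • (U i * ρ * (U i)ᴴ) := by
  subst hT
  have hdC : ((d:ℂ) - 1) ≠ 0 := sub_ne_zero.mpr (by
    exact_mod_cast (by omega : d ≠ 1))
  refine ⟨cp_lemma d (by omega), ?_, ?_, ?_⟩
  · -- trace preserving
    intro A
    simp only [Matrix.trace_smul, Matrix.trace_sub, Matrix.trace_smul, Matrix.trace_one,
      Matrix.trace_transpose, smul_eq_mul, Fintype.card_fin]
    field_simp
  · -- unital
    have h1 : ((1 : Matrix (Fin d) (Fin d) ℂ).trace) • (1 : Matrix (Fin d) (Fin d) ℂ)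
        - (1 : Matrix (Fin d) (Fin d) ℂ)ᵀ = ((d:ℂ) - 1) • 1 := by
      rw [Matrix.trace_one, Matrix.transpose_one, sub_smul, one_smul]
      simp [Fintype.card_fin]
    simp only [h1, smul_smul, inv_mul_cancel₀ hdC, one_smul]
  · -- not mixed unitary
    rintro ⟨n, p, U, hp0, hp1, hU, hmix⟩
    -- entrywise consequence of the mixture identity
    have hentry : ∀ a b x y : Fin d,
        ((d : ℂ) - 1)⁻¹ * (((Matrix.single a b (1:ℂ)).trace
            • (1 : Matrix (Fin d) (Fin d) ℂ) - (Matrix.single a b (1:ℂ))ᵀ) x y)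
          = ∑ i, (p i : ℂ) * (U i x a * star (U i y b)) := by
      intro a b x y
      have h := congrFun (congrFun (hmix (Matrix.single a b 1)) x) y
      simpa [Matrix.sum_apply, Matrix.smul_apply, smul_eq_mul, unitary_conj_entry] using h
    -- compute the left-hand total
    have hL : (∑ a : Fin d, ∑ b : Fin d, ((d:ℂ)-1)⁻¹
        * (((Matrix.single a b (1:ℂ)).trace • (1 : Matrix (Fin d) (Fin d) ℂ)
            - (Matrix.single a b (1:ℂ))ᵀ) b a)) = -(d:ℂ) := by
      have h1 : ∀ a b : Fin d, ((Matrix.single a b (1:ℂ)).trace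
          • (1 : Matrix (Fin d) (Fin d) ℂ) - (Matrix.single a b (1:ℂ))ᵀ) b a
          = (if a = b then 1 else 0) - 1 := by
        intro a b
        rcases eq_or_ne a b with h | h
        · subst h
          simp [Matrix.trace, Matrix.diag, Matrix.single, Matrix.one_apply, ite_and,
            Finset.sum_ite_eq', Matrix.sub_apply, Matrix.smul_apply, Matrix.transpose_apply,
            smul_eq_mul]
        · simp [h, h.symm, Matrix.trace, Matrix.diag, Matrix.single, Matrix.one_apply,
            ite_and, Finset.sum_ite_eq', Matrix.sub_apply, Matrix.smul_apply,
            Matrix.transpose_apply, smul_eq_mul]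
      simp only [h1]
      have h2 : ∀ a : Fin d, ∑ b : Fin d,
          (((d:ℂ)-1)⁻¹ * ((if a = b then 1 else 0) - 1)) = ((d:ℂ)-1)⁻¹ * (1 - d) := by
        intro a
        rw [← Finset.mul_sum]
        congr 1
        rw [Finset.sum_sub_distrib]
        simp [Finset.sum_ite_eq, Finset.card_univ]
      simp only [h2, Finset.sum_const, Finset.card_univ, Fintype.card_fin, nsmul_eq_mul]
      field_simp
      ring
    -- the master equation
    have main : -(d:ℂ) = ∑ i, (p i : ℂ) * (∑ a : Fin d, ∑ b : Fin d, U i b a * star (U i a b)) := by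
      calc -(d:ℂ) = ∑ a : Fin d, ∑ b : Fin d, ((d:ℂ)-1)⁻¹
            * (((Matrix.single a b (1:ℂ)).trace • (1 : Matrix (Fin d) (Fin d) ℂ)
                - (Matrix.single a b (1:ℂ))ᵀ) b a) := hL.symm
        _ = ∑ a : Fin d, ∑ b : Fin d, ∑ i, (p i : ℂ) * (U i b a * star (U i a b)) :=
            Finset.sum_congr rfl fun a _ => Finset.sum_congr rfl fun b _ => hentry a b b a
        _ = ∑ a : Fin d, ∑ i, ∑ b : Fin d, (p i : ℂ) * (U i b a * star (U i a b)) :=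
            Finset.sum_congr rfl fun a _ => Finset.sum_comm
        _ = ∑ i, ∑ a : Fin d, ∑ b : Fin d, (p i : ℂ) * (U i b a * star (U i a b)) :=
            Finset.sum_comm
        _ = ∑ i, (p i : ℂ) * (∑ a : Fin d, ∑ b : Fin d, U i b a * star (U i a b)) := by
            refine Finset.sum_congr rfl fun i _ => ?_
            rw [Finset.mul_sum]
            exact Finset.sum_congr rfl fun a _ => (Finset.mul_sum _ _ _).symm
    -- real parts
    set s : Fin n → ℝ := fun i => ∑ a : Fin d, ∑ b : Fin d, (U i b a * star (U i a b)).re with hs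
    have hre : -(d:ℝ) = ∑ i, p i * s i := by
      have h := congrArg Complex.re main
      simp only [Complex.re_sum, Complex.neg_re, Complex.natCast_re, Complex.mul_re,
        Complex.ofReal_re, Complex.ofReal_im, zero_mul, sub_zero] at h
      rw [h]
      refine Finset.sum_congr rfl fun i _ => ?_
      rw [hs]
      simp [Complex.re_sum]
    -- bound for each unitary
    have hbound : ∀ i, ∑ a : Fin d, ∑ b : Fin d, Complex.normSq (U i a b + U i b a)
        = 2 * (s i + d) := by
      intro i
      have hVu : U i * (U i)ᴴ = 1 := by
        have := Matrix.mem_unitaryGroup_iff.mp (hU i)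
        rwa [Matrix.star_eq_conjTranspose] at this
      exact unitary_bound (U i) hVu
    have hsge : ∀ i, -(d:ℝ) ≤ s i := by
      intro i
      have h0 : 0 ≤ ∑ a : Fin d, ∑ b : Fin d, Complex.normSq (U i a b + U i b a) :=
        Finset.sum_nonneg fun a _ => Finset.sum_nonneg fun b _ => Complex.normSq_nonneg _
      rw [hbound i] at h0
      linarith
    have hzero : ∑ i, p i * (s i + d) = 0 := by
      have : ∑ i, p i * (s i + d) = (∑ i, p i * s i) + (∑ i, p i) * d := by
        rw [Finset.sum_mul, ← Finset.sum_add_distrib]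
        exact Finset.sum_congr rfl fun i _ => by ring
      rw [this, ← hre, hp1]
      ring
    have hterm : ∀ i ∈ Finset.univ, p i * (s i + d) = 0 :=
      (Finset.sum_eq_zero_iff_of_nonneg fun i _ =>
        mul_nonneg (hp0 i) (by linarith [hsge i])).mp hzero
    obtain ⟨i0, hi0⟩ : ∃ i, p i ≠ 0 := by
      by_contra h
      push_neg at h
      rw [Finset.sum_congr rfl (fun i _ => h i)] at hp1
      simp at hp1
    have hsi0 : s i0 + d = 0 := by
      have := hterm i0 (Finset.mem_univ i0)
      exact (mul_eq_zero.mp this).resolve_left hi0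
    have hnormzero : ∑ a : Fin d, ∑ b : Fin d, Complex.normSq (U i0 a b + U i0 b a) = 0 := by
      rw [hbound i0, hsi0]; ring
    have hanti : ∀ a b : Fin d, U i0 a b + U i0 b a = 0 := by
      intro a b
      have h1 : ∀ a ∈ Finset.univ, ∑ b : Fin d, Complex.normSq (U i0 a b + U i0 b a) = 0 :=
        (Finset.sum_eq_zero_iff_of_nonneg fun a _ =>
          Finset.sum_nonneg fun b _ => Complex.normSq_nonneg _).mp hnormzero
      have h2 : ∀ b ∈ Finset.univ, Complex.normSq (U i0 a b + U i0 b a) = 0 :=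
        (Finset.sum_eq_zero_iff_of_nonneg fun b _ => Complex.normSq_nonneg _).mp
          (h1 a (Finset.mem_univ a))
      exact Complex.normSq_eq_zero.mp (h2 b (Finset.mem_univ b))
    have htr : (U i0)ᵀ = -U i0 := by
      ext a b
      have := hanti b a
      simp only [Matrix.transpose_apply, Matrix.neg_apply]
      linear_combination this
    have hdet0 : (U i0).det = 0 := by
      have h6 : (U i0).det = (-(U i0)).det := by rw [← Matrix.det_transpose, htr]
      rw [Matrix.det_neg, Fintype.card_fin, hd.neg_one_pow, neg_one_mul] at h6
      linear_combination h6 / 2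
    have hVu : U i0 * (U i0)ᴴ = 1 := by
      have := Matrix.mem_unitaryGroup_iff.mp (hU i0)
      rwa [Matrix.star_eq_conjTranspose] at this
    have hdet1 : (U i0).det * ((U i0)ᴴ).det = 1 := by
      rw [← Matrix.det_mul, hVu, Matrix.det_one]
    rw [hdet0, zero_mul] at hdet1
    exact zero_ne_one hdet1
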